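/- Myerson virtual-cost identity: under the hypotheses, the expected payment equals the expected virtual cost times allocation plus the utility at zero minus the integral of r: ∫₀^ω p(x) f(x) dx = p(0) − ∫₀^ω r(x) dx + ∫₀^ω (x + F(x)/f(x))·r(x)·f(x) dx, where p(x) = p(0) + x·r(x) − ∫₀ˣ r(t) dt. -/

import Mathlib

open MeasureTheory intervalIntegral

/-- Myerson virtual-cost identity:
∫₀^ω p(x) f(x) dx = p(0) − ∫₀^ω r(x) dx + ∫₀^ω (x + F(x)/f(x))·r(x)·f(x) dx,
where p(x) = p(0) + x·r(x) − ∫₀ˣ r(t) dt, f is a strictly positive continuous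
density on [0,ω] with CDF F, and r is nonnegative, nonincreasing, integrable. -/
theorem stmt_5 (ω : ℝ) (hω : 0 < ω) (f r : ℝ → ℝ)
    (hfpos : ∀ x ∈ Set.Icc (0:ℝ) ω, 0 < f x)
    (hfcont : ContinuousOn f (Set.Icc 0 ω))
    (hfone : (∫ s in (0:ℝ)..ω, f s) = 1)
    (F : ℝ → ℝ) (hF : ∀ t ∈ Set.Icc (0:ℝ) ω, F t = ∫ s in (0:ℝ)..t, f s)
    (hrpos : ∀ x ∈ Set.Icc (0:ℝ) ω, 0 ≤ r x)
    (hr : AntitoneOn r (Set.Icc 0 ω))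
    (hrint : IntervalIntegrable r volume 0 ω)
    (p : ℝ → ℝ)
    (hp : ∀ x ∈ Set.Icc (0:ℝ) ω, p x = p 0 + x * r x - ∫ t in (0:ℝ)..x, r t) :
    (∫ x in (0:ℝ)..ω, p x * f x)
      = p 0 - (∫ x in (0:ℝ)..ω, r x)
        + ∫ x in (0:ℝ)..ω, (x + F x / f x) * r x * f x := by
  have huIcc : Set.uIcc (0:ℝ) ω = Set.Icc 0 ω := Set.uIcc_of_le hω.le
  -- extend r to an antitone function on all of ℝ
  set r' : ℝ → ℝ := fun x => r (max 0 (min x ω)) with hr'def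
  have hmem : ∀ x : ℝ, max 0 (min x ω) ∈ Set.Icc (0:ℝ) ω := by
    intro x
    exact ⟨le_max_left _ _, max_le hω.le (min_le_right _ _)⟩
  have hr'eq : ∀ x ∈ Set.Icc (0:ℝ) ω, r' x = r x := by
    intro x hx
    simp only [hr'def]
    rw [min_eq_left hx.2, max_eq_right hx.1]
  have hr'anti : Antitone r' := by
    intro a b hab
    exact hr (hmem a) (hmem b)
      (max_le_max le_rfl (min_le_min_right _ hab))
  have hr'int : ∀ a b : ℝ, IntervalIntegrable r' volume a b := fun a b =>
    hr'anti.intervalIntegrable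
  have hSc : {x : ℝ | ¬ ContinuousAt r' x}.Countable :=
    hr'anti.countable_not_continuousAt
  -- primitives
  set R : ℝ → ℝ := fun x => ∫ t in (0:ℝ)..x, r' t with hRdef
  set G : ℝ → ℝ := fun x => ∫ s in (0:ℝ)..x, f s with hGdef
  have hfcont' : ContinuousOn f (Set.uIcc 0 ω) := by rw [huIcc]; exact hfcont
  have hfi : IntervalIntegrable f volume 0 ω := hfcont'.intervalIntegrable
  have hRcont : ContinuousOn R (Set.uIcc 0 ω) :=
    continuousOn_primitive_interval' (hr'int 0 ω) Set.left_mem_uIcc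
  have hGcont : ContinuousOn G (Set.uIcc 0 ω) :=
    continuousOn_primitive_interval' hfi Set.left_mem_uIcc
  -- integrabilities
  have hint1 : IntervalIntegrable (fun x => r' x * G x) volume 0 ω :=
    (hr'int 0 ω).mul_continuousOn hGcont
  have hint2 : IntervalIntegrable (fun x => R x * f x) volume 0 ω :=
    (hRcont.mul hfcont').intervalIntegrable
  have hint3 : IntervalIntegrable (fun x => r' x * (x * f x)) volume 0 ω :=
    (hr'int 0 ω).mul_continuousOn (continuousOn_id.mul hfcont')
  -- integration by parts via FTC off a countable set
  have key : (∫ x in (0:ℝ)..ω, (r' x * G x + R x * f x)) = R ω := by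
    have h := MeasureTheory.integral_eq_of_hasDerivAt_off_countable
      (fun x => R x * G x) (fun x => r' x * G x + R x * f x)
      (a := 0) (b := ω) hSc (hRcont.mul hGcont) ?_
      (hint1.add hint2)
    · rw [h]
      have hR0 : R 0 = 0 := integral_same
      have hG0 : G 0 = 0 := integral_same
      have hGω : G ω = 1 := hfone
      show R ω * G ω - R 0 * G 0 = R ω
      rw [hR0, hG0, hGω]; ring
    · intro x hx
      rw [min_eq_left hω.le, max_eq_right hω.le] at hx
      obtain ⟨hx1, hx2⟩ := hx
      have hxIcc : Set.Icc (0:ℝ) ω ∈ nhds x := Icc_mem_nhds hx1.1 hx1.2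
      have hRd : HasDerivAt R (r' x) x := by
        refine integral_hasDerivAt_right (hr'int 0 x)
          ⟨Set.univ, Filter.univ_mem, hr'anti.measurable.aestronglyMeasurable⟩ ?_
        simpa using hx2
      have hGd : HasDerivAt G (f x) x := by
        refine integral_hasDerivAt_right (hfi.mono_set ?_)
          (ContinuousOn.stronglyMeasurableAtFilter isOpen_Ioo
            (hfcont.mono Set.Ioo_subset_Icc_self) x hx1) ?_
        · rw [Set.uIcc_of_le hx1.1.le, huIcc]
          exact Set.Icc_subset_Icc le_rfl hx1.2.le
        · exact hfcont.continuousAt hxIcc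
      exact hRd.mul hGd
  have keysplit : (∫ x in (0:ℝ)..ω, r' x * G x) + (∫ x in (0:ℝ)..ω, R x * f x) = R ω := by
    rw [← intervalIntegral.integral_add hint1 hint2]; exact key
  -- rewrite LHS
  have hRr : ∀ x ∈ Set.Icc (0:ℝ) ω, R x = ∫ t in (0:ℝ)..x, r t := by
    intro x hx
    refine intervalIntegral.integral_congr fun t ht => ?_
    rw [Set.uIcc_of_le hx.1] at ht
    exact hr'eq t ⟨ht.1, ht.2.trans hx.2⟩
  have hLHS : (∫ x in (0:ℝ)..ω, p x * f x)
      = (∫ x in (0:ℝ)..ω, (p 0 * f x + r' x * (x * f x) - R x * f x)) := by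
    refine intervalIntegral.integral_congr fun x hx => ?_
    rw [huIcc] at hx
    rw [hp x hx, ← hRr x hx, hr'eq x hx]; ring
  have hconstint : IntervalIntegrable (fun x => p 0 * f x) volume 0 ω :=
    hfi.const_mul (p 0)
  have hLHS2 : (∫ x in (0:ℝ)..ω, p x * f x)
      = p 0 + (∫ x in (0:ℝ)..ω, r' x * (x * f x)) - ∫ x in (0:ℝ)..ω, R x * f x := by
    rw [hLHS, intervalIntegral.integral_sub (hconstint.add hint3) hint2,
      intervalIntegral.integral_add hconstint hint3,
      intervalIntegral.integral_const_mul, hfone, mul_one]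
  -- rewrite RHS integral
  have hRHS : (∫ x in (0:ℝ)..ω, (x + F x / f x) * r x * f x)
      = (∫ x in (0:ℝ)..ω, r' x * (x * f x)) + ∫ x in (0:ℝ)..ω, r' x * G x := by
    rw [← intervalIntegral.integral_add hint3 hint1]
    refine intervalIntegral.integral_congr fun x hx => ?_
    rw [huIcc] at hx
    have hfx : f x ≠ 0 := (hfpos x hx).ne'
    have hFx : F x = G x := hF x hx
    rw [hFx, hr'eq x hx]
    field_simp
  have hrR : (∫ x in (0:ℝ)..ω, r x) = R ω := by
    rw [hRr ω ⟨hω.le, le_rfl⟩]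
  rw [hLHS2, hRHS, hrR]
  linarith [keysplit]
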